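/- For every positive integer n, 0 ≤ n(n+2)/3 - G(n) ≤ ⌊log₂ n⌋ / 3. -/

import Mathlib

open Finset

/-- The largest odd divisor of `k`. -/
def oddPart (k : ℕ) : ℕ := ordCompl[2] k

/-- `V n = ∑_{k=1}^n α(k)/k` as a rational number. -/
def V (n : ℕ) : ℚ := ∑ k ∈ Finset.Icc 1 n, (oddPart k : ℚ) / k

/-- `v n = V n - 2n/3`. -/
def v (n : ℕ) : ℚ := V n - 2 * n / 3

/-- `U n = ∑_{k=1}^n α(k)`. -/
def U (n : ℕ) : ℕ := ∑ k ∈ Finset.Icc 1 n, oddPart k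

/-- `G n = ∑_{k=1}^n (n+1-k)·α(k)/k` as a rational number. -/
def G (n : ℕ) : ℚ := ∑ k ∈ Finset.Icc 1 n, ((n : ℚ) + 1 - k) * (oddPart k : ℚ) / k

/-- `g n = n(n+2)/3 - G n`. -/
def g (n : ℕ) : ℚ := n * (n + 2) / 3 - G n




lemma oddPart_two_mul (k : ℕ) : oddPart (2 * k) = oddPart k := by
  rcases Nat.eq_zero_or_pos k with rfl | hk
  · simp [oddPart]
  · unfold oddPart
    rw [Nat.ordCompl_mul]
    have : ordCompl[2] 2 = 1 := by
      simp [Nat.Prime.factorization_self Nat.prime_two]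
    rw [this, one_mul]

lemma oddPart_odd {k : ℕ} (h : Odd k) : oddPart k = k := by
  unfold oddPart
  rw [Nat.factorization_eq_zero_of_not_dvd (by simpa using h.not_two_dvd_nat)]
  simp




lemma a_odd (n : ℕ) : (oddPart (2*n+1) : ℚ) / ((2*n+1 : ℕ) : ℚ) = 1 := by
  rw [oddPart_odd ⟨n, by ring⟩, div_self]
  exact Nat.cast_ne_zero.mpr (by omega)

lemma a_even (n : ℕ) :
    (oddPart (2*n) : ℚ) / ((2*n : ℕ) : ℚ) = ((oddPart n : ℚ) / (n : ℚ)) / 2 := by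
  rw [oddPart_two_mul, div_div]
  congr 1
  push_cast; ring

lemma V_succ (n : ℕ) : V (n+1) = V n + (oddPart (n+1) : ℚ) / ((n+1 : ℕ) : ℚ) := by
  unfold V; rw [Finset.sum_Icc_succ_top (by omega)]

lemma V_two_mul (n : ℕ) : V (2*n) = n + V n / 2 := by
  induction n with
  | zero => simp [V]
  | succ n ih =>
    have e1 : 2*(n+1) = (2*n+1)+1 := by ring
    rw [e1, V_succ, show (2*n+1) = (2*n)+1 from rfl, V_succ, ih]
    have e2 : 2*n+1+1 = 2*(n+1) := by ring
    rw [show (2*n)+1 = 2*n+1 from rfl, a_odd, e2, a_even (n+1), V_succ n]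
    push_cast
    ring

lemma V_odd (n : ℕ) : V (2*n+1) = V (2*n) + 1 := by
  rw [show (2*n+1) = (2*n)+1 from rfl, V_succ, show (2*n)+1 = 2*n+1 from rfl, a_odd]



lemma v_two_mul (n : ℕ) : v (2*n) = v n / 2 := by
  unfold v; rw [V_two_mul]; push_cast; ring

lemma v_odd (n : ℕ) : v (2*n+1) = v n / 2 + 1/3 := by
  unfold v; rw [V_odd, V_two_mul]; push_cast; ring

lemma v_bounds (n : ℕ) : 0 ≤ v n ∧ v n ≤ 2/3 := by
  induction n using Nat.strong_induction_on with
  | _ n ih =>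
    rcases Nat.eq_zero_or_pos n with rfl | hn
    · norm_num [v, V]
    rcases Nat.even_or_odd n with ⟨m, hm⟩ | ⟨m, hm⟩
    · have hm' : n = 2*m := by omega
      subst hm'
      obtain ⟨h1, h2⟩ := ih m (by omega)
      rw [v_two_mul]
      constructor <;> linarith
    · subst hm
      obtain ⟨h1, h2⟩ := ih m (by omega)
      rw [v_odd]
      constructor <;> linarith

def S (n : ℕ) : ℚ := ∑ m ∈ Finset.Icc 1 n, (1/3 - v m)

lemma S_succ (n : ℕ) : S (n+1) = S n + (1/3 - v (n+1)) := by
  unfold S; rw [Finset.sum_Icc_succ_top (by omega)]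

lemma S_two_mul (n : ℕ) : S (2*n) = S n + v n / 2 := by
  induction n with
  | zero => simp [S, v, V]
  | succ n ih =>
    have e1 : 2*(n+1) = (2*n+1)+1 := by ring
    rw [e1, S_succ, show (2*n+1) = (2*n)+1 from rfl, S_succ, ih]
    rw [show (2*n)+1 = 2*n+1 from rfl, v_odd, show (2*n+1)+1 = 2*(n+1) by ring,
      v_two_mul, S_succ n]
    ring

lemma S_odd (n : ℕ) : S (2*n+1) = S n := by
  rw [show (2*n+1) = (2*n)+1 from rfl, S_succ, S_two_mul,
    show (2*n)+1 = 2*n+1 from rfl, v_odd]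
  ring



lemma G_eq_sum_V (n : ℕ) : G n = ∑ m ∈ Finset.Icc 1 n, V m := by
  unfold G V
  rw [Finset.sum_comm' (s := Finset.Icc 1 n) (t := fun m => Finset.Icc 1 m)
    (t' := Finset.Icc 1 n) (s' := fun k => Finset.Icc k n)
    (by intro m k; simp only [Finset.mem_Icc]; omega)]
  apply Finset.sum_congr rfl
  intro k hk
  rw [Finset.sum_const, Nat.card_Icc]
  simp only [Finset.mem_Icc] at hk
  rw [nsmul_eq_mul]
  rw [show ((n + 1 - k : ℕ) : ℚ) = (n : ℚ) + 1 - k by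
    have : k ≤ n := hk.2
    push_cast [Nat.cast_sub (by omega : k ≤ n + 1)]
    ring]
  ring

lemma g_eq_S (n : ℕ) : (n : ℚ) * (n + 2) / 3 - G n = S n := by
  rw [G_eq_sum_V]
  induction n with
  | zero => simp [S]
  | succ n ih =>
    rw [Finset.sum_Icc_succ_top (by omega), S_succ]
    rw [show V (n+1) = v (n+1) + 2*((n:ℚ)+1)/3 by unfold v; push_cast; ring]
    push_cast
    linarith [ih]

lemma S_bounds (n : ℕ) (hn : 0 < n) : 0 ≤ S n ∧ S n ≤ (Nat.log 2 n : ℚ) / 3 := by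
  induction n using Nat.strong_induction_on with
  | _ n ih =>
    rcases eq_or_lt_of_le (show 1 ≤ n from hn) with h1 | h1
    · rw [← h1]
      have hop : oddPart 1 = 1 := by simp [oddPart]
      norm_num [S, v, V, Finset.Icc_self, hop]
    rcases Nat.even_or_odd n with ⟨m, hm⟩ | ⟨m, hm⟩
    · have hm' : n = 2*m := by omega
      have hm1 : 0 < m := by omega
      subst hm'
      obtain ⟨h2, h3⟩ := ih m (by omega) hm1
      obtain ⟨hv0, hv1⟩ := v_bounds m
      rw [S_two_mul]
      have hlog : Nat.log 2 (2*m) = Nat.log 2 m + 1 := by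
        rw [mul_comm, Nat.log_mul_base (by norm_num) (by omega)]
      rw [hlog]
      constructor
      · linarith
      · push_cast; linarith
    · have hm1 : 0 < m := by omega
      subst hm
      obtain ⟨h2, h3⟩ := ih m (by omega) hm1
      rw [S_odd]
      have hlog : Nat.log 2 m ≤ Nat.log 2 (2*m+1) := Nat.log_mono_right (by omega)
      constructor
      · exact h2
      · calc S m ≤ (Nat.log 2 m : ℚ)/3 := h3
          _ ≤ (Nat.log 2 (2*m+1) : ℚ)/3 := by
              have := Nat.cast_le (α := ℚ) |>.mpr hlog
              linarith

theorem stmt16 (n : ℕ) (hn : 0 < n) :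
    0 ≤ (n : ℚ) * (n + 2) / 3 - G n ∧
      (n : ℚ) * (n + 2) / 3 - G n ≤ (Nat.log 2 n : ℚ) / 3 := by
  rw [g_eq_S]
  exact S_bounds n hn
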